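/- Non-termination of the unguarded rewrite system on convex sets: there exist nonempty compact convex sets A₀, B₀, C in ℝ × ℝ such that, defining recursively B_{n+1} = B_n ∩ convexHull ℝ (A_n ∪ C) and A_{n+1} = A_n ∩ convexHull ℝ (B_{n+1} ∪ C), one has A_{n+1} ≠ A_n and B_{n+1} ≠ B_n for every n : ℕ; that is, the descending iteration enforcing A ⊑ B ⊔ C and B ⊑ A ⊔ C strictly decreases forever and never reaches a fixed point. -/

import Mathlib

open Set

private noncomputable def aSeq : ℕ → ℝ
  | 0 => 0
  | n + 1 => (aSeq n + 6) / 4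

private noncomputable def bSeq : ℕ → ℝ
  | 0 => 0
  | n + 1 => (aSeq n + 2) / 2

private lemma aSeq_lt_two : ∀ n, aSeq n < 2
  | 0 => by norm_num [aSeq]
  | n + 1 => by have := aSeq_lt_two n; simp only [aSeq]; linarith

private lemma bSeq_le_aSeq : ∀ n, bSeq n ≤ aSeq n
  | 0 => le_refl _
  | n + 1 => by
      have := aSeq_lt_two n
      simp only [aSeq, bSeq]; linarith

private lemma bSeq_lt_two : ∀ n, bSeq n < 2
  | 0 => by norm_num [bSeq]
  | n + 1 => by have := aSeq_lt_two n; simp only [bSeq]; linarith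

private lemma aSeq_lt_bSeq_succ (n : ℕ) : aSeq n < bSeq (n + 1) := by
  have := aSeq_lt_two n; simp only [bSeq]; linarith

private lemma bSeq_succ_lt_aSeq_succ (n : ℕ) : bSeq (n + 1) < aSeq (n + 1) := by
  have := aSeq_lt_two n; simp only [aSeq, bSeq]; linarith

/-- The horizontal segment at height `y` from `x₁` to `2`, as a set. -/
private def hseg (x₁ y : ℝ) : Set (ℝ × ℝ) := {p : ℝ × ℝ | p.2 = y ∧ x₁ ≤ p.1 ∧ p.1 ≤ 2}

private def Cseg : Set (ℝ × ℝ) := segment ℝ ((2 : ℝ), (-1 : ℝ)) ((2 : ℝ), (2 : ℝ))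

private lemma hseg_eq_segment (x₁ y : ℝ) (h : x₁ ≤ 2) :
    hseg x₁ y = segment ℝ ((x₁, y) : ℝ × ℝ) ((2 : ℝ), y) := by
  ext p
  constructor
  · rintro ⟨hy, hl, hr⟩
    rcases eq_or_lt_of_le h with heq | hlt
    · refine ⟨1, 0, by norm_num, le_refl _, by norm_num, ?_⟩
      have : p.1 = x₁ := le_antisymm (heq ▸ hr) hl
      simp [Prod.ext_iff, this.symm, hy.symm]
    · have h2 : (0:ℝ) < 2 - x₁ := by linarith
      have h2' : (2 : ℝ) - x₁ ≠ 0 := ne_of_gt h2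
      refine ⟨(2 - p.1) / (2 - x₁), (p.1 - x₁) / (2 - x₁), ?_, ?_, ?_, ?_⟩
      · exact div_nonneg (by linarith) (le_of_lt h2)
      · exact div_nonneg (by linarith) (le_of_lt h2)
      · field_simp
        ring
      · apply Prod.ext
        · simp only [Prod.fst_add, Prod.smul_fst, smul_eq_mul]
          field_simp
          ring
        · simp only [Prod.snd_add, Prod.smul_snd, smul_eq_mul]
          field_simp
          linear_combination (x₁ - 2) * hy
  · rintro ⟨u, v, hu, hv, huv, rfl⟩
    refine ⟨?_, ?_, ?_⟩ <;>
      simp only [Prod.fst_add, Prod.snd_add, Prod.smul_fst, Prod.smul_snd, smul_eq_mul]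
    · linear_combination y * huv
    · nlinarith
    · nlinarith

private lemma mem_Cseg (y : ℝ) (h1 : -1 ≤ y) (h2 : y ≤ 2) : ((2 : ℝ), y) ∈ Cseg := by
  refine ⟨(2 - y) / 3, (y + 1) / 3, div_nonneg (by linarith) (by norm_num),
    div_nonneg (by linarith) (by norm_num), by ring, ?_⟩
  apply Prod.ext <;> simp <;> ring

/-- Key step-B lemma. -/
private lemma stepB (a b : ℝ) (ha : a < 2) (hb : b ≤ (a + 2) / 2) :
    hseg ((a + 2) / 2) 1 = hseg b 1 ∩ convexHull ℝ (hseg a 0 ∪ Cseg) := by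
  have ha2 : a ≤ 2 := le_of_lt ha
  ext p
  constructor
  · rintro ⟨hy, hl, hr⟩
    refine ⟨⟨hy, le_trans hb hl, hr⟩, ?_⟩
    -- p lies on the segment from ((a+2)/2, 1) to (2, 1), both endpoints in the hull
    have hP : ((a + 2) / 2, (1 : ℝ)) ∈ convexHull ℝ (hseg a 0 ∪ Cseg) := by
      have h1 : ((a : ℝ), (0 : ℝ)) ∈ convexHull ℝ (hseg a 0 ∪ Cseg) :=
        subset_convexHull ℝ _ (Or.inl ⟨rfl, le_refl _, ha2⟩)
      have h2 : ((2 : ℝ), (2 : ℝ)) ∈ convexHull ℝ (hseg a 0 ∪ Cseg) :=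
        subset_convexHull ℝ _ (Or.inr (mem_Cseg 2 (by norm_num) (by norm_num)))
      have := (convex_convexHull ℝ (hseg a 0 ∪ Cseg)) h1 h2
        (by norm_num : (0:ℝ) ≤ 1/2) (by norm_num : (0:ℝ) ≤ 1/2) (by norm_num)
      convert this using 1
      apply Prod.ext <;> simp <;> ring
    have hQ : ((2 : ℝ), (1 : ℝ)) ∈ convexHull ℝ (hseg a 0 ∪ Cseg) :=
      subset_convexHull ℝ _ (Or.inr (mem_Cseg 1 (by norm_num) (by norm_num)))
    have hsub := (convex_convexHull ℝ (hseg a 0 ∪ Cseg)).segment_subset hP hQ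
    apply hsub
    rw [← hseg_eq_segment _ _ (by linarith)]
    exact ⟨hy, hl, hr⟩
  · rintro ⟨⟨hy, hbl, hr⟩, hhull⟩
    -- separating halfplane
    have hH : convexHull ℝ (hseg a 0 ∪ Cseg) ⊆ {p : ℝ × ℝ | (2 - a) * p.2 ≤ 2 * (p.1 - a)} := by
      apply convexHull_min
      · rintro q (⟨hq2, hql, hqr⟩ | ⟨u, v, hu, hv, huv, rfl⟩)
        · simp only [mem_setOf_eq, hq2]; nlinarith
        · simp only [mem_setOf_eq]; simp; nlinarith
      · rintro x hx y hy u v hu hv huv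
        simp only [mem_setOf_eq] at hx hy ⊢
        simp only [Prod.fst_add, Prod.snd_add, Prod.smul_fst, Prod.smul_snd, smul_eq_mul]
        nlinarith
    have := hH hhull
    simp only [mem_setOf_eq, hy] at this
    exact ⟨hy, by linarith, hr⟩

/-- Key step-A lemma. -/
private lemma stepA (b a : ℝ) (hb : b < 2) (ha : a ≤ (b + 2) / 2) :
    hseg ((b + 2) / 2) 0 = hseg a 0 ∩ convexHull ℝ (hseg b 1 ∪ Cseg) := by
  have hb2 : b ≤ 2 := le_of_lt hb
  ext p
  constructor
  · rintro ⟨hy, hl, hr⟩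
    refine ⟨⟨hy, le_trans ha hl, hr⟩, ?_⟩
    have hP : ((b + 2) / 2, (0 : ℝ)) ∈ convexHull ℝ (hseg b 1 ∪ Cseg) := by
      have h1 : ((b : ℝ), (1 : ℝ)) ∈ convexHull ℝ (hseg b 1 ∪ Cseg) :=
        subset_convexHull ℝ _ (Or.inl ⟨rfl, le_refl _, hb2⟩)
      have h2 : ((2 : ℝ), (-1 : ℝ)) ∈ convexHull ℝ (hseg b 1 ∪ Cseg) :=
        subset_convexHull ℝ _ (Or.inr (mem_Cseg (-1) (le_refl _) (by norm_num)))
      have := (convex_convexHull ℝ (hseg b 1 ∪ Cseg)) h1 h2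
        (by norm_num : (0:ℝ) ≤ 1/2) (by norm_num : (0:ℝ) ≤ 1/2) (by norm_num)
      convert this using 1
      apply Prod.ext <;> simp <;> ring
    have hQ : ((2 : ℝ), (0 : ℝ)) ∈ convexHull ℝ (hseg b 1 ∪ Cseg) :=
      subset_convexHull ℝ _ (Or.inr (mem_Cseg 0 (by norm_num) (by norm_num)))
    have hsub := (convex_convexHull ℝ (hseg b 1 ∪ Cseg)).segment_subset hP hQ
    apply hsub
    rw [← hseg_eq_segment _ _ (by linarith)]
    exact ⟨hy, hl, hr⟩
  · rintro ⟨⟨hy, hal, hr⟩, hhull⟩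
    have hH : convexHull ℝ (hseg b 1 ∪ Cseg) ⊆
        {p : ℝ × ℝ | 0 ≤ 2 * (p.1 - b) + (2 - b) * (p.2 - 1)} := by
      apply convexHull_min
      · rintro q (⟨hq2, hql, hqr⟩ | ⟨u, v, hu, hv, huv, rfl⟩)
        · simp only [mem_setOf_eq, hq2]; nlinarith
        · simp only [mem_setOf_eq]; simp; nlinarith
      · rintro x hx y hy' u v hu hv huv
        simp only [mem_setOf_eq] at hx hy' ⊢
        simp only [Prod.fst_add, Prod.snd_add, Prod.smul_fst, Prod.smul_snd, smul_eq_mul]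
        nlinarith
    have := hH hhull
    simp only [mem_setOf_eq, hy] at this
    exact ⟨hy, by linarith, hr⟩

private lemma isCompact_hseg (x₁ y : ℝ) (h : x₁ ≤ 2) : IsCompact (hseg x₁ y) := by
  rw [hseg_eq_segment _ _ h, segment_eq_image]
  exact isCompact_Icc.image (by continuity)

private lemma convex_hseg (x₁ y : ℝ) (h : x₁ ≤ 2) : Convex ℝ (hseg x₁ y) := by
  rw [hseg_eq_segment _ _ h]; exact convex_segment _ _

/-- Non-termination of the unguarded rewrite system on convex sets: there are
nonempty compact convex sets `A₀, B₀, C` in `ℝ × ℝ` for which the descending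
iteration enforcing `A ⊑ B ⊔ C` and `B ⊑ A ⊔ C` (with join given by the convex
hull of the union and meet by intersection) strictly decreases forever. -/
theorem unguarded_rewrite_diverges :
    ∃ (A B : ℕ → Set (ℝ × ℝ)) (C : Set (ℝ × ℝ)),
      (A 0).Nonempty ∧ IsCompact (A 0) ∧ Convex ℝ (A 0) ∧
      (B 0).Nonempty ∧ IsCompact (B 0) ∧ Convex ℝ (B 0) ∧
      C.Nonempty ∧ IsCompact C ∧ Convex ℝ C ∧
      (∀ n : ℕ, B (n + 1) = B n ∩ convexHull ℝ (A n ∪ C)) ∧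
      (∀ n : ℕ, A (n + 1) = A n ∩ convexHull ℝ (B (n + 1) ∪ C)) ∧
      (∀ n : ℕ, A (n + 1) ≠ A n ∧ B (n + 1) ≠ B n) := by
  refine ⟨fun n => hseg (aSeq n) 0, fun n => hseg (bSeq n) 1, Cseg, ?_, ?_, ?_, ?_, ?_, ?_,
    ?_, ?_, ?_, ?_, ?_, ?_⟩
  · exact ⟨((2 : ℝ), (0 : ℝ)), rfl, by norm_num [aSeq], le_refl _⟩
  · exact isCompact_hseg _ _ (le_of_lt (aSeq_lt_two 0))
  · exact convex_hseg _ _ (le_of_lt (aSeq_lt_two 0))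
  · exact ⟨((2 : ℝ), (1 : ℝ)), rfl, by norm_num [bSeq], le_refl _⟩
  · exact isCompact_hseg _ _ (le_of_lt (bSeq_lt_two 0))
  · exact convex_hseg _ _ (le_of_lt (bSeq_lt_two 0))
  · exact ⟨_, left_mem_segment ℝ _ _⟩
  · rw [Cseg.eq_def, segment_eq_image]; exact isCompact_Icc.image (by continuity)
  · exact convex_segment _ _
  · intro n
    show hseg (bSeq (n + 1)) 1 = hseg (bSeq n) 1 ∩ convexHull ℝ (hseg (aSeq n) 0 ∪ Cseg)
    have h1 : bSeq (n + 1) = (aSeq n + 2) / 2 := rfl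
    rw [h1]
    exact stepB (aSeq n) (bSeq n) (aSeq_lt_two n)
      (by rw [← h1]; exact le_of_lt (lt_of_le_of_lt (bSeq_le_aSeq n) (aSeq_lt_bSeq_succ n)))
  · intro n
    show hseg (aSeq (n + 1)) 0 = hseg (aSeq n) 0 ∩ convexHull ℝ (hseg (bSeq (n + 1)) 1 ∪ Cseg)
    have h1 : aSeq (n + 1) = (bSeq (n + 1) + 2) / 2 := by
      simp only [aSeq, bSeq]; ring
    rw [h1]
    exact stepA (bSeq (n + 1)) (aSeq n) (bSeq_lt_two (n + 1))
      (by rw [← h1]; exact le_of_lt (lt_trans (aSeq_lt_bSeq_succ n) (bSeq_succ_lt_aSeq_succ n)))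
  · intro n
    constructor
    · intro h
      have h' : hseg (aSeq (n + 1)) 0 = hseg (aSeq n) 0 := h
      have hmem : ((aSeq n : ℝ), (0 : ℝ)) ∈ hseg (aSeq (n + 1)) 0 := by
        rw [h']; exact ⟨rfl, le_refl _, le_of_lt (aSeq_lt_two n)⟩
      have : aSeq (n + 1) ≤ aSeq n := hmem.2.1
      have h2 := aSeq_lt_bSeq_succ n
      have h3 := bSeq_succ_lt_aSeq_succ n
      linarith
    · intro h
      have h' : hseg (bSeq (n + 1)) 1 = hseg (bSeq n) 1 := h
      have hmem : ((bSeq n : ℝ), (1 : ℝ)) ∈ hseg (bSeq (n + 1)) 1 := by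
        rw [h']; exact ⟨rfl, le_refl _, le_of_lt (bSeq_lt_two n)⟩
      have : bSeq (n + 1) ≤ bSeq n := hmem.2.1
      have h2 := bSeq_le_aSeq n
      have h3 := aSeq_lt_bSeq_succ n
      linarith
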